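/- Let C = V(y² − xz) ⊂ ℙ² and let ψ: ℂ[x,y,z] → ℂ[s,t] be the ring homomorphism with ψ(x) = s², ψ(y) = st, ψ(z) = t². If a₁, a₂, a₃ ∈ ℂ[x,y,z] satisfy −z a₁ + 2y a₂ − x a₃ ∈ ⟨y² − xz⟩, then t²ψ(a₁) − 2st·ψ(a₂) + s²ψ(a₃) = 0, and there exist Q₁, Q₂ ∈ ℂ[s,t] with ψ(a₁) = sQ₁, ψ(a₂) = (tQ₁ + sQ₂)/2, ψ(a₃) = tQ₂. -/

import Mathlib

open MvPolynomial

lemma primeX0 : Prime (X 0 : MvPolynomial (Fin 2) ℂ) := by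
  rw [← MulEquiv.prime_iff (MvPolynomial.finSuccEquiv ℂ 1).toMulEquiv]
  have : (MvPolynomial.finSuccEquiv ℂ 1).toMulEquiv (X 0 : MvPolynomial (Fin 2) ℂ)
      = Polynomial.X := finSuccEquiv_X_zero
  rw [this]
  exact Polynomial.prime_X

lemma primeX1 : Prime (X 1 : MvPolynomial (Fin 2) ℂ) := by
  have h := primeX0
  rw [← MulEquiv.prime_iff (MvPolynomial.renameEquiv ℂ (Equiv.swap (0:Fin 2) 1)).toMulEquiv] at h
  have : (MvPolynomial.renameEquiv ℂ (Equiv.swap (0:Fin 2) 1)).toMulEquiv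
      (X 0 : MvPolynomial (Fin 2) ℂ) = X 1 := by simp
  rwa [this] at h

lemma notdvd01 : ¬ (X 0 : MvPolynomial (Fin 2) ℂ) ∣ X 1 := by
  intro ⟨q, hq⟩
  have := congrArg (eval ![0, 1]) hq
  simp at this

lemma notdvd10 : ¬ (X 1 : MvPolynomial (Fin 2) ℂ) ∣ X 0 := by
  intro ⟨q, hq⟩
  have := congrArg (eval ![1, 0]) hq
  simp at this

/-- Pulling back a derivation tangent to the conic `C = V(y² − xz)`
along the Veronese parametrization `ψ : x ↦ s², y ↦ st, z ↦ t²` yields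
`t²ψ(a₁) − 2st·ψ(a₂) + s²ψ(a₃) = 0`, and hence `ψ(a₁) = sQ₁`,
`2ψ(a₂) = tQ₁ + sQ₂`, `ψ(a₃) = tQ₂` for some `Q₁, Q₂`. -/
theorem veronese_pullback_tangent_conic
    (a₁ a₂ a₃ : MvPolynomial (Fin 3) ℂ)
    (h : -(X 2) * a₁ + 2 * X 1 * a₂ - X 0 * a₃ ∈
        Ideal.span {(X 1 ^ 2 - X 0 * X 2 : MvPolynomial (Fin 3) ℂ)}) :
    (X 1 ^ 2 * aeval ![X 0 ^ 2, X 0 * X 1, X 1 ^ 2] a₁ -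
        2 * (X 0 * X 1) * aeval ![X 0 ^ 2, X 0 * X 1, X 1 ^ 2] a₂ +
        X 0 ^ 2 * aeval ![X 0 ^ 2, X 0 * X 1, X 1 ^ 2] a₃ = (0 : MvPolynomial (Fin 2) ℂ)) ∧
    ∃ Q₁ Q₂ : MvPolynomial (Fin 2) ℂ,
      aeval ![X 0 ^ 2, X 0 * X 1, X 1 ^ 2] a₁ = X 0 * Q₁ ∧
      2 * aeval ![X 0 ^ 2, X 0 * X 1, X 1 ^ 2] a₂ = X 1 * Q₁ + X 0 * Q₂ ∧
      aeval ![X 0 ^ 2, X 0 * X 1, X 1 ^ 2] a₃ = X 1 * Q₂ := by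
  set ψ := aeval (R := ℂ) ![X 0 ^ 2, X 0 * X 1, (X 1 : MvPolynomial (Fin 2) ℂ) ^ 2] with hψ
  set A := ψ a₁
  set B := ψ a₂
  set C := ψ a₃
  obtain ⟨c, hc⟩ := Ideal.mem_span_singleton.mp h
  have key : X 1 ^ 2 * A - 2 * (X 0 * X 1) * B + X 0 ^ 2 * C = 0 := by
    have h2 := congrArg ψ hc
    simp only [map_add, map_sub, map_mul, map_neg, map_ofNat, map_pow, hψ, aeval_X] at h2
    simp only [Matrix.cons_val_zero, Matrix.cons_val_one, Matrix.head_cons,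
      Matrix.cons_val_two, Matrix.tail_cons] at h2
    linear_combination -h2
  have hA : (X 0 : MvPolynomial (Fin 2) ℂ) ∣ A := by
    have : (X 0 : MvPolynomial (Fin 2) ℂ) ∣ X 1 ^ 2 * A :=
      ⟨2 * X 1 * B - X 0 * C, by linear_combination key⟩
    rcases primeX0.2.2 _ _ this with h' | h'
    · exact absurd (primeX0.dvd_of_dvd_pow h') notdvd01
    · exact h'
  have hC : (X 1 : MvPolynomial (Fin 2) ℂ) ∣ C := by
    have : (X 1 : MvPolynomial (Fin 2) ℂ) ∣ X 0 ^ 2 * C :=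
      ⟨2 * X 0 * B - X 1 * A, by linear_combination key⟩
    rcases primeX1.2.2 _ _ this with h' | h'
    · exact absurd (primeX1.dvd_of_dvd_pow h') notdvd10
    · exact h'
  obtain ⟨Q₁, hQ₁⟩ := hA
  obtain ⟨Q₂, hQ₂⟩ := hC
  refine ⟨key, Q₁, Q₂, hQ₁, ?_, hQ₂⟩
  have hne : (X 0 * X 1 : MvPolynomial (Fin 2) ℂ) ≠ 0 :=
    mul_ne_zero (X_ne_zero 0) (X_ne_zero 1)
  have : (X 0 * X 1) * (2 * B) = (X 0 * X 1) * (X 1 * Q₁ + X 0 * Q₂) := by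
    linear_combination -key + X 1 ^ 2 * hQ₁ + X 0 ^ 2 * hQ₂
  exact mul_left_cancel₀ hne this
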